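/- arXiv:math/0412130 — 2 statements merged into one kernel-verified Lean document; each statement's English description precedes it below -/
import Mathlib

section
/- A finite connected oriented graph Γ (with at least one edge) is irreducible — i.e., the complete set Δ_Γ admits no decomposition — if and only if Γ is not a wedge of two smaller graphs; that is, if and only if there is no partition of the edge set L = L₁ ⊔ L₂ into two nonempty parts such that the subgraphs generated by L₁ and by L₂ share exactly one vertex. -/
/-- `S` is a complete subset relative to the arrangement `Δ`. -/
def IsCompleteSet {V : Type*} [AddCommGroup V] [Module ℝ V] (Δ S : Set V) : Prop :=
  Δ ∩ (Submodule.span ℝ S : Set V) = S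

/-- `(S₁, S₂)` is a decomposition of the set `S`. -/
def IsDecomposition {V : Type*} [AddCommGroup V] [Module ℝ V] (S S₁ S₂ : Set V) : Prop :=
  S₁.Nonempty ∧ S₂.Nonempty ∧ Disjoint S₁ S₂ ∧ S₁ ∪ S₂ = S ∧
    Submodule.span ℝ S₁ ⊓ Submodule.span ℝ S₂ = ⊥ ∧
    Submodule.span ℝ S₁ ⊔ Submodule.span ℝ S₂ = Submodule.span ℝ S

/-- A nonempty complete set is irreducible if it admits no decomposition. -/
def IsIrred {V : Type*} [AddCommGroup V] [Module ℝ V] (Δ S : Set V) : Prop :=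
  IsCompleteSet Δ S ∧ S.Nonempty ∧ ∀ S₁ S₂ : Set V, ¬ IsDecomposition S S₁ S₂

/-- The underlying simple graph of an oriented graph. -/
def graphOf {Vt E : Type*} (ini fin : E → Vt) : SimpleGraph Vt where
  Adj v w := v ≠ w ∧ ∃ a : E, s(ini a, fin a) = s(v, w)
  symm := ⟨by
    rintro v w ⟨h, a, ha⟩
    exact ⟨h.symm, a, ha.trans (Sym2.eq_swap)⟩⟩
  loopless := ⟨fun v h => h.1 rfl⟩

/-- The vector `x_a = e_{f(a)} - e_{i(a)}` associated to an edge `a`. -/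
def edgeVec {Vt E : Type*} [DecidableEq Vt] (ini fin : E → Vt) (a : E) : Vt → ℝ :=
  Pi.single (fin a) 1 - Pi.single (ini a) 1

/-- The vertex set of the subgraph with edge set `A`. -/
def vertexSet {Vt E : Type*} (ini fin : E → Vt) (A : Set E) : Set Vt :=
  {v | ∃ a ∈ A, v = ini a ∨ v = fin a}


set_option linter.unusedSectionVars false
set_option linter.unreachableTactic false
set_option linter.unnecessarySeqFocus false
set_option linter.unusedTactic false

section
variable {Vt E : Type*} [Fintype Vt] [DecidableEq Vt]
  (ini fin : E → Vt)

lemma edgeVec_apply (a : E) (w : Vt) :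
    edgeVec ini fin a w = (if w = fin a then (1:ℝ) else 0) - (if w = ini a then 1 else 0) := by
  simp [edgeVec, Pi.single_apply, eq_comm]

lemma edgeVec_inj (hloop : ∀ a, ini a ≠ fin a)
    (hsimple : Function.Injective fun a => s(ini a, fin a)) :
    Function.Injective (edgeVec ini fin) := by
  intro a b hab
  have h1 := congrFun hab (fin a)
  have h2 := congrFun hab (ini a)
  rw [edgeVec_apply, edgeVec_apply] at h1 h2
  simp only [if_pos rfl, if_neg (Ne.symm (hloop a))] at h1 h2
  have hfin : fin a = fin b := by
    by_contra h
    rw [if_neg h] at h1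
    by_cases h' : fin a = ini b <;> simp [h'] at h1 <;> norm_num at h1
  have hini : ini a = ini b := by
    by_contra h
    rw [if_neg h] at h2
    by_cases h' : ini a = fin b <;>
      simp [h', hfin.symm, hloop a, (hloop a).symm] at h2 <;> norm_num at h2
  exact hsimple (by simp [hfin, hini])

lemma sum_edgeVec (a : E) : ∑ w, edgeVec ini fin a w = 0 := by
  simp [edgeVec_apply, Finset.sum_sub_distrib]

lemma edgeVec_eq_zero_of_not_mem {A : Set E} {a : E} (ha : a ∈ A) {w : Vt}
    (hw : w ∉ vertexSet ini fin A) : edgeVec ini fin a w = 0 := by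
  have h1 : w ≠ fin a := fun h => hw ⟨a, ha, Or.inr h⟩
  have h2 : w ≠ ini a := fun h => hw ⟨a, ha, Or.inl h⟩
  simp [edgeVec_apply, h1, h2]

/-- functions supported in `W` with zero sum, as a submodule -/
def suppSum (W : Set Vt) : Submodule ℝ (Vt → ℝ) where
  carrier := {f | (∀ w ∉ W, f w = 0) ∧ ∑ w, f w = 0}
  add_mem' := by
    rintro f g ⟨hf1, hf2⟩ ⟨hg1, hg2⟩
    exact ⟨fun w hw => by simp [hf1 w hw, hg1 w hw],
      by simp [Finset.sum_add_distrib, hf2, hg2]⟩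
  zero_mem' := ⟨fun w _ => rfl, by simp⟩
  smul_mem' := by
    rintro c f ⟨h1, h2⟩
    exact ⟨fun w hw => by simp [h1 w hw], by simp [← Finset.mul_sum, h2]⟩

lemma span_le_suppSum (A : Set E) :
    Submodule.span ℝ (edgeVec ini fin '' A) ≤ suppSum (vertexSet ini fin A) := by
  rw [Submodule.span_le]
  rintro _ ⟨a, ha, rfl⟩
  exact ⟨fun w hw => edgeVec_eq_zero_of_not_mem ini fin ha hw, sum_edgeVec ini fin a⟩

end
set_option linter.unusedSectionVars false

section
variable {Vt E : Type*} [Fintype Vt] [DecidableEq Vt]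
  (ini fin : E → Vt)

/-- the simple graph generated by the edges in `A` -/
def Gr (A : Set E) : SimpleGraph Vt where
  Adj v w := v ≠ w ∧ ∃ a ∈ A, s(ini a, fin a) = s(v, w)
  symm := ⟨by
    rintro v w ⟨h, a, ha, ha'⟩
    exact ⟨h.symm, a, ha, ha'.trans (Sym2.eq_swap)⟩⟩
  loopless := ⟨fun v h => h.1 rfl⟩

variable (hloop : ∀ a, ini a ≠ fin a)

lemma mem_vs_ini {A : Set E} {a : E} (ha : a ∈ A) : ini a ∈ vertexSet ini fin A :=
  ⟨a, ha, Or.inl rfl⟩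

lemma mem_vs_fin {A : Set E} {a : E} (ha : a ∈ A) : fin a ∈ vertexSet ini fin A :=
  ⟨a, ha, Or.inr rfl⟩

lemma vs_mono {A B : Set E} (h : A ⊆ B) : vertexSet ini fin A ⊆ vertexSet ini fin B := by
  rintro v ⟨a, ha, hv⟩; exact ⟨a, h ha, hv⟩

lemma vs_union (A B : Set E) :
    vertexSet ini fin (A ∪ B) = vertexSet ini fin A ∪ vertexSet ini fin B := by
  ext v
  constructor
  · rintro ⟨a, ha | ha, hv⟩
    · exact Or.inl ⟨a, ha, hv⟩
    · exact Or.inr ⟨a, ha, hv⟩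
  · rintro (⟨a, ha, hv⟩ | ⟨a, ha, hv⟩)
    · exact ⟨a, Or.inl ha, hv⟩
    · exact ⟨a, Or.inr ha, hv⟩

/-- adjacent in `Gr A` implies difference vector in span -/
lemma adj_sub_mem {A : Set E} {u w : Vt} (h : (Gr ini fin A).Adj u w) :
    (Pi.single w 1 - Pi.single u 1 : Vt → ℝ) ∈ Submodule.span ℝ (edgeVec ini fin '' A) := by
  obtain ⟨hne, a, ha, hs⟩ := h
  rw [Sym2.eq_iff] at hs
  rcases hs with ⟨h1, h2⟩ | ⟨h1, h2⟩
  · have : edgeVec ini fin a = Pi.single w 1 - Pi.single u 1 := by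
      rw [edgeVec, h1, h2]
    rw [← this]
    exact Submodule.subset_span ⟨a, ha, rfl⟩
  · have he : edgeVec ini fin a = Pi.single u 1 - Pi.single w 1 := by
      rw [edgeVec, h1, h2]
    have hm : -edgeVec ini fin a ∈ Submodule.span ℝ (edgeVec ini fin '' A) :=
      Submodule.neg_mem _ (Submodule.subset_span ⟨a, ha, rfl⟩)
    rw [he] at hm
    simpa using hm

lemma reachable_sub_mem {A : Set E} {u v : Vt} (h : (Gr ini fin A).Reachable u v) :
    (Pi.single v 1 - Pi.single u 1 : Vt → ℝ) ∈ Submodule.span ℝ (edgeVec ini fin '' A) := by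
  obtain ⟨p⟩ := h
  induction p with
  | nil => simp
  | cons h p ih =>
    rename_i x y z
    have h1 := adj_sub_mem ini fin h
    have : (Pi.single z 1 - Pi.single x 1 : Vt → ℝ) =
        (Pi.single z 1 - Pi.single y 1) + (Pi.single y 1 - Pi.single x 1) := by ring
    rw [this]
    exact Submodule.add_mem _ ih h1
variable (hloop : ∀ a, ini a ≠ fin a)
include hloop

lemma endpoint_reachable {A : Set E} {a : E} (ha : a ∈ A) {v : Vt}
    (hv : v = ini a ∨ v = fin a) : (Gr ini fin A).Reachable (ini a) v := by
  rcases hv with rfl | rfl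
  · exact SimpleGraph.Reachable.refl _
  · exact SimpleGraph.Adj.reachable ⟨hloop a, a, ha, rfl⟩

/-- dichotomy: the subgraph generated by `A` is connected, or `A` splits into two
vertex-disjoint nonempty parts -/
lemma dichotomy {A : Set E} (hA : A.Nonempty) :
    (∀ u ∈ vertexSet ini fin A, ∀ v ∈ vertexSet ini fin A, (Gr ini fin A).Reachable u v) ∨
    (∃ A₁ A₂ : Set E, A₁.Nonempty ∧ A₂.Nonempty ∧ Disjoint A₁ A₂ ∧ A₁ ∪ A₂ = A ∧
      vertexSet ini fin A₁ ∩ vertexSet ini fin A₂ = ∅) := by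
  obtain ⟨a₀, ha₀⟩ := hA
  set A₁ : Set E := {a ∈ A | (Gr ini fin A).Reachable (ini a₀) (ini a)} with hA₁def
  set A₂ : Set E := A \ A₁ with hA₂def
  by_cases h2 : A₂.Nonempty
  · right
    refine ⟨A₁, A₂, ⟨a₀, ha₀, SimpleGraph.Reachable.refl _⟩, h2,
      Set.disjoint_sdiff_right, Set.union_diff_cancel (fun a ha => ha.1), ?_⟩
    ext v
    simp only [Set.mem_inter_iff, Set.mem_empty_iff_false, iff_false, not_and]
    rintro ⟨a₁, ha₁, hv₁⟩ ⟨a₂, ha₂, hv₂⟩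
    have r1 : (Gr ini fin A).Reachable (ini a₀) v :=
      ha₁.2.trans (endpoint_reachable ini fin hloop ha₁.1 hv₁)
    have r2 : (Gr ini fin A).Reachable (ini a₀) (ini a₂) :=
      r1.trans (endpoint_reachable ini fin hloop (ha₂.1) hv₂).symm
    exact ha₂.2 ⟨ha₂.1, r2⟩
  · left
    have hall : ∀ v ∈ vertexSet ini fin A, (Gr ini fin A).Reachable (ini a₀) v := by
      rintro v ⟨a, ha, hv⟩
      have haA₁ : a ∈ A₁ := by
        by_contra hn
        exact h2 ⟨a, ha, hn⟩
      exact haA₁.2.trans (endpoint_reachable ini fin hloop ha hv)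
    intro u hu v hv
    exact (hall u hu).symm.trans (hall v hv)

omit hloop in
/-- along a walk in the whole graph from the vertex set of `A` to that of `B`,
some vertex lies in both -/
lemma walk_cross {A B : Set E} (hAB : A ∪ B = Set.univ) :
    ∀ {u v : Vt} (_ : (graphOf ini fin).Walk u v),
      u ∈ vertexSet ini fin A → v ∈ vertexSet ini fin B →
      (vertexSet ini fin A ∩ vertexSet ini fin B).Nonempty := by
  intro u v p
  induction p with
  | nil => exact fun hu hv => ⟨_, hu, hv⟩
  | @cons x y z h' p' ih =>
    intro hx hz
    obtain ⟨hne, a, hs⟩ := (h' : x ≠ y ∧ ∃ a : E, s(ini a, fin a) = s(x, y))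
    rw [Sym2.eq_iff] at hs
    have hxe : x = ini a ∨ x = fin a := by
      rcases hs with ⟨h1, _⟩ | ⟨_, h2⟩
      · exact Or.inl h1.symm
      · exact Or.inr h2.symm
    have hye : y = ini a ∨ y = fin a := by
      rcases hs with ⟨_, h2⟩ | ⟨h1, _⟩
      · exact Or.inr h2.symm
      · exact Or.inl h1.symm
    have haAB : a ∈ A ∪ B := hAB ▸ Set.mem_univ a
    rcases haAB with haA | haB
    · refine ih ?_ hz
      rcases hye with h1 | h1 <;> exact ⟨a, haA, Or.imp Eq.symm Eq.symm (by tauto)⟩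
    · exact ⟨x, hx, ⟨a, haB, hxe⟩⟩

omit hloop in
lemma shared_nonempty (hconn : (graphOf ini fin).Connected)
    {A B : Set E} (hA : A.Nonempty) (hB : B.Nonempty) (hAB : A ∪ B = Set.univ) :
    (vertexSet ini fin A ∩ vertexSet ini fin B).Nonempty := by
  obtain ⟨a, ha⟩ := hA
  obtain ⟨b, hb⟩ := hB
  obtain ⟨p⟩ := hconn.preconnected (ini a) (ini b)
  exact walk_cross ini fin hAB p (mem_vs_ini ini fin ha) (mem_vs_ini ini fin hb)

end
section
variable {Vt E : Type*} [Fintype Vt] [DecidableEq Vt] (ini fin : E → Vt)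

lemma span_split {L₂ A B : Set E}
    (hV : vertexSet ini fin A ∩ vertexSet ini fin B = ∅)
    (hbot : Submodule.span ℝ (edgeVec ini fin '' (A ∪ B)) ⊓
      Submodule.span ℝ (edgeVec ini fin '' L₂) = ⊥) :
    Submodule.span ℝ (edgeVec ini fin '' A) ⊓
      Submodule.span ℝ (edgeVec ini fin '' (B ∪ L₂)) = ⊥ := by
  rw [eq_bot_iff]
  rintro f ⟨hfA, hfB⟩
  rw [Set.image_union, Submodule.span_union] at hfB
  obtain ⟨g, hg, h, hh, hf⟩ := Submodule.mem_sup.1 hfB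
  have hmonoA : Submodule.span ℝ (edgeVec ini fin '' A) ≤
      Submodule.span ℝ (edgeVec ini fin '' (A ∪ B)) :=
    Submodule.span_mono (Set.image_mono Set.subset_union_left)
  have hmonoB : Submodule.span ℝ (edgeVec ini fin '' B) ≤
      Submodule.span ℝ (edgeVec ini fin '' (A ∪ B)) :=
    Submodule.span_mono (Set.image_mono Set.subset_union_right)
  have hfg : f - g ∈ Submodule.span ℝ (edgeVec ini fin '' (A ∪ B)) ⊓
      Submodule.span ℝ (edgeVec ini fin '' L₂) := by
    constructor
    · exact Submodule.sub_mem _ (hmonoA hfA) (hmonoB hg)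
    · have : f - g = h := by rw [← hf]; abel
      rw [this]; exact hh
  rw [hbot, Submodule.mem_bot, sub_eq_zero] at hfg
  subst hfg
  have hsA := span_le_suppSum ini fin A hfA
  have hsB := span_le_suppSum ini fin B hg
  have : f = 0 := by
    funext w
    by_cases hw : w ∈ vertexSet ini fin A
    · have hw' : w ∉ vertexSet ini fin B := fun h' =>
        (Set.eq_empty_iff_forall_notMem.1 hV w) ⟨hw, h'⟩
      exact hsB.1 w hw'
    · exact hsA.1 w hw
  simp [this]

variable (hloop : ∀ a, ini a ≠ fin a) (hconn : (graphOf ini fin).Connected)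
include hconn

lemma step {L₁ L₂ A B : Set E} (hA : A.Nonempty) (hB : B.Nonempty)
    (hU : A ∪ B = L₁) (hV : vertexSet ini fin A ∩ vertexSet ini fin B = ∅)
    (hd12 : Disjoint L₁ L₂) (hUu : L₁ ∪ L₂ = Set.univ)
    (hbot : Submodule.span ℝ (edgeVec ini fin '' L₁) ⊓
      Submodule.span ℝ (edgeVec ini fin '' L₂) = ⊥) :
    (B ∪ L₂).Nonempty ∧ Disjoint A (B ∪ L₂) ∧ A ∪ (B ∪ L₂) = Set.univ ∧
      (Submodule.span ℝ (edgeVec ini fin '' A) ⊓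
        Submodule.span ℝ (edgeVec ini fin '' (B ∪ L₂)) = ⊥) ∧
      (vertexSet ini fin A ∩ vertexSet ini fin (B ∪ L₂)) ⊂
        (vertexSet ini fin L₁ ∩ vertexSet ini fin L₂) := by
  have hVempty : ∀ w, w ∈ vertexSet ini fin A → w ∈ vertexSet ini fin B → False :=
    fun w h1 h2 => (Set.eq_empty_iff_forall_notMem.1 hV w) ⟨h1, h2⟩
  have hdAB : Disjoint A B := Set.disjoint_left.2 fun a haA haB =>
    hVempty (ini a) (mem_vs_ini ini fin haA) (mem_vs_ini ini fin haB)
  have hAL₁ : A ⊆ L₁ := hU ▸ Set.subset_union_left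
  have hBL₁ : B ⊆ L₁ := hU ▸ Set.subset_union_right
  refine ⟨⟨hB.choose, Or.inl hB.choose_spec⟩, ?_, ?_, ?_, ?_⟩
  · exact Set.disjoint_union_right.2 ⟨hdAB, hd12.mono_left hAL₁⟩
  · rw [← Set.union_assoc, hU, hUu]
  · exact span_split ini fin hV (by rw [hU]; exact hbot)
  · have hnew : vertexSet ini fin A ∩ vertexSet ini fin (B ∪ L₂) =
        vertexSet ini fin A ∩ vertexSet ini fin L₂ := by
      rw [vs_union]
      ext w
      simp only [Set.mem_inter_iff, Set.mem_union]
      constructor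
      · rintro ⟨h1, h2 | h2⟩
        · exact absurd (hVempty w h1 h2) not_false
        · exact ⟨h1, h2⟩
      · rintro ⟨h1, h2⟩; exact ⟨h1, Or.inr h2⟩
    rw [hnew]
    constructor
    · exact Set.inter_subset_inter_left _ (vs_mono ini fin hAL₁)
    · intro hsub
      obtain ⟨x, hxB, hxAL⟩ := shared_nonempty ini fin hconn hB
        ⟨hA.choose, Or.inl hA.choose_spec⟩
        (by rw [← Set.union_assoc, Set.union_comm B A, hU, hUu])
      rw [vs_union] at hxAL
      have hxL₂ : x ∈ vertexSet ini fin L₂ := by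
        rcases hxAL with h | h
        · exact absurd (hVempty x h hxB) not_false
        · exact h
      have hx_old : x ∈ vertexSet ini fin L₁ ∩ vertexSet ini fin L₂ :=
        ⟨vs_mono ini fin hBL₁ hxB, hxL₂⟩
      have := hsub hx_old
      exact hVempty x this.1 hxB
end
section
variable {Vt E : Type*} [Fintype Vt] [DecidableEq Vt] (ini fin : E → Vt)
variable (hloop : ∀ a, ini a ≠ fin a) (hconn : (graphOf ini fin).Connected)
include hloop hconn

lemma main_rec : ∀ n : ℕ, ∀ L₁ L₂ : Set E, L₁.Nonempty → L₂.Nonempty →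
    Disjoint L₁ L₂ → L₁ ∪ L₂ = Set.univ →
    Submodule.span ℝ (edgeVec ini fin '' L₁) ⊓
      Submodule.span ℝ (edgeVec ini fin '' L₂) = ⊥ →
    (vertexSet ini fin L₁ ∩ vertexSet ini fin L₂).ncard ≤ n →
    ∃ L₁ L₂ : Set E, L₁.Nonempty ∧ L₂.Nonempty ∧ Disjoint L₁ L₂ ∧
      L₁ ∪ L₂ = Set.univ ∧
      ∃ v : Vt, vertexSet ini fin L₁ ∩ vertexSet ini fin L₂ = {v} := by
  intro n
  induction n with
  | zero =>
    intro L₁ L₂ h1 h2 hd hU hbot hc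
    obtain ⟨x, hx⟩ := shared_nonempty ini fin hconn h1 h2 hU
    have : 0 < (vertexSet ini fin L₁ ∩ vertexSet ini fin L₂).ncard :=
      (Set.ncard_pos (Set.toFinite _)).2 ⟨x, hx⟩
    omega
  | succ n ih =>
    intro L₁ L₂ h1 h2 hd hU hbot hc
    by_cases hone : ∃ v : Vt, vertexSet ini fin L₁ ∩ vertexSet ini fin L₂ = {v}
    · exact ⟨L₁, L₂, h1, h2, hd, hU, hone⟩
    -- at least two shared vertices
    have hcard : 1 < (vertexSet ini fin L₁ ∩ vertexSet ini fin L₂).ncard := by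
      obtain ⟨x, hx⟩ := shared_nonempty ini fin hconn h1 h2 hU
      have hpos : 0 < (vertexSet ini fin L₁ ∩ vertexSet ini fin L₂).ncard :=
        (Set.ncard_pos (Set.toFinite _)).2 ⟨x, hx⟩
      rcases Nat.lt_or_ge 1 (vertexSet ini fin L₁ ∩ vertexSet ini fin L₂).ncard with h | h
      · exact h
      · exfalso
        have : (vertexSet ini fin L₁ ∩ vertexSet ini fin L₂).ncard = 1 := by omega
        exact hone (Set.ncard_eq_one.1 this)
    obtain ⟨u, v, hu, hv, huv⟩ :=
      (Set.one_lt_ncard_iff (Set.toFinite _)).1 hcard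
    rcases dichotomy ini fin hloop h1 with hreach1 | ⟨A, B, hA, hB, hdAB, hUAB, hVAB⟩
    · rcases dichotomy ini fin hloop h2 with hreach2 | ⟨A, B, hA, hB, hdAB, hUAB, hVAB⟩
      · -- both connected: contradiction
        exfalso
        have hm1 := reachable_sub_mem ini fin (hreach1 u hu.1 v hv.1)
        have hm2 := reachable_sub_mem ini fin (hreach2 u hu.2 v hv.2)
        have : (Pi.single v 1 - Pi.single u 1 : Vt → ℝ) ∈ (⊥ : Submodule ℝ (Vt → ℝ)) := by
          rw [← hbot]; exact ⟨hm1, hm2⟩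
        rw [Submodule.mem_bot] at this
        have := congrFun this v
        simp [Pi.single_eq_same, Pi.single_eq_of_ne (Ne.symm huv)] at this
      · -- L₂ splits
        obtain ⟨hne, hdisj, hUu, hbot', hss⟩ :=
          step ini fin hconn hA hB hUAB hVAB hd.symm (by rw [Set.union_comm]; exact hU)
            (by rw [inf_comm]; exact hbot)
        refine ih A (B ∪ L₁) hA hne hdisj hUu hbot' ?_
        have hlt := Set.ncard_lt_ncard hss (Set.toFinite _)
        rw [Set.inter_comm (vertexSet ini fin L₂)] at hlt
        omega
    · -- L₁ splits
      obtain ⟨hne, hdisj, hUu, hbot', hss⟩ :=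
        step ini fin hconn hA hB hUAB hVAB hd hU hbot
      refine ih A (B ∪ L₂) hA hne hdisj hUu hbot' ?_
      have hlt := Set.ncard_lt_ncard hss (Set.toFinite _)
      omega
end
/-- a finite connected oriented graph with at least one edge is
irreducible (the complete set `Δ_Γ` admits no decomposition) iff it is not a
wedge: there is no partition `L = L₁ ⊔ L₂` into nonempty parts such that the
subgraphs generated by `L₁` and `L₂` share exactly one vertex. -/
theorem stmt_13 {Vt E : Type*} [Fintype Vt] [DecidableEq Vt] [Fintype E]
    [Nonempty E]
    (ini fin : E → Vt) (hloop : ∀ a, ini a ≠ fin a)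
    (hsimple : Function.Injective fun a => s(ini a, fin a))
    (hconn : (graphOf ini fin).Connected) :
    IsIrred (Set.range (edgeVec ini fin)) (Set.range (edgeVec ini fin)) ↔
      ¬ ∃ L₁ L₂ : Set E, L₁.Nonempty ∧ L₂.Nonempty ∧ Disjoint L₁ L₂ ∧
        L₁ ∪ L₂ = Set.univ ∧
        ∃ v : Vt, vertexSet ini fin L₁ ∩ vertexSet ini fin L₂ = {v} := by
  have hinj := edgeVec_inj ini fin hloop hsimple
  have hcomp : IsCompleteSet (Set.range (edgeVec ini fin)) (Set.range (edgeVec ini fin)) := by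
    apply Set.ext
    intro x
    exact ⟨fun h => h.1, fun h => ⟨h, Submodule.subset_span h⟩⟩
  have hne : (Set.range (edgeVec ini fin)).Nonempty := Set.range_nonempty _
  constructor
  · -- irreducible → no wedge
    rintro ⟨-, -, hnodec⟩ ⟨L₁, L₂, h1, h2, hd, hU, v, hV⟩
    apply hnodec (edgeVec ini fin '' L₁) (edgeVec ini fin '' L₂)
    have himg : edgeVec ini fin '' L₁ ∪ edgeVec ini fin '' L₂ = Set.range (edgeVec ini fin) := by
      rw [← Set.image_union, hU, Set.image_univ]
    refine ⟨h1.image _, h2.image _, (Set.disjoint_image_iff hinj).2 hd, himg, ?_, ?_⟩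
    · rw [eq_bot_iff]
      rintro f ⟨hfA, hfB⟩
      have hsA := span_le_suppSum ini fin L₁ hfA
      have hsB := span_le_suppSum ini fin L₂ hfB
      have hsupp : ∀ w : Vt, w ≠ v → f w = 0 := by
        intro w hw
        by_cases h : w ∈ vertexSet ini fin L₁
        · have : w ∉ vertexSet ini fin L₂ := by
            intro h'
            have : w ∈ ({v} : Set Vt) := hV ▸ ⟨h, h'⟩
            exact hw this
          exact hsB.1 w this
        · exact hsA.1 w h
      have hv0 : f v = 0 := by
        have hsum := hsA.2
        rwa [Finset.sum_eq_single v (fun w _ hw => hsupp w hw) (fun h => absurd (Finset.mem_univ v) h)] at hsum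
      have : f = 0 := by
        funext w
        by_cases h : w = v
        · rw [h, hv0]; rfl
        · rw [hsupp w h]; rfl
      simp [this]
    · rw [← himg, Submodule.span_union]
  · -- no wedge → irreducible
    intro hnw
    refine ⟨hcomp, hne, ?_⟩
    rintro S₁ S₂ ⟨hS1, hS2, hdS, hUS, hbotS, -⟩
    apply hnw
    have hsub1 : S₁ ⊆ Set.range (edgeVec ini fin) := hUS ▸ Set.subset_union_left
    have hsub2 : S₂ ⊆ Set.range (edgeVec ini fin) := hUS ▸ Set.subset_union_right
    set L₁ : Set E := edgeVec ini fin ⁻¹' S₁ with hL₁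
    set L₂ : Set E := edgeVec ini fin ⁻¹' S₂ with hL₂
    have himg1 : edgeVec ini fin '' L₁ = S₁ := Set.image_preimage_eq_of_subset hsub1
    have himg2 : edgeVec ini fin '' L₂ = S₂ := Set.image_preimage_eq_of_subset hsub2
    have hn1 : L₁.Nonempty := by
      obtain ⟨x, hx⟩ := hS1
      obtain ⟨a, rfl⟩ := hsub1 hx
      exact ⟨a, hx⟩
    have hn2 : L₂.Nonempty := by
      obtain ⟨x, hx⟩ := hS2
      obtain ⟨a, rfl⟩ := hsub2 hx
      exact ⟨a, hx⟩
    have hdL : Disjoint L₁ L₂ := hdS.preimage _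
    have hUL : L₁ ∪ L₂ = Set.univ := by
      rw [hL₁, hL₂, ← Set.preimage_union, hUS, ← Set.preimage_range (edgeVec ini fin)]
    have hbotL : Submodule.span ℝ (edgeVec ini fin '' L₁) ⊓
        Submodule.span ℝ (edgeVec ini fin '' L₂) = ⊥ := by
      rw [himg1, himg2]; exact hbotS
    exact main_rec ini fin hloop hconn
      (vertexSet ini fin L₁ ∩ vertexSet ini fin L₂).ncard L₁ L₂
      hn1 hn2 hdL hUL hbotL le_rfl
end

section
/- In Δ(m,n): every non-degenerate rectangle A × B is irreducible. Moreover, if S = ⋃_{i=1}^h A_i × B_i is a complete set, where the A_i are pairwise disjoint and the B_i are pairwise disjoint, then the irreducible components of S are the non-degenerate rectangles A_i × B_i together with the single elements of the degenerate rectangles A_i × B_i. -/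
/-- `𝒞` is the set of irreducible components of `S`: a finite family of pairwise
disjoint irreducible sets whose (disjoint) union is `S` and whose spans form a
direct sum decomposition of the span of `S`. -/
def IsIrredComponents {V : Type*} [AddCommGroup V] [Module ℝ V]
    (Δ S : Set V) (𝒞 : Set (Set V)) : Prop :=
  𝒞.Finite ∧ (∀ T ∈ 𝒞, IsIrred Δ T) ∧ 𝒞.PairwiseDisjoint id ∧ ⋃₀ 𝒞 = S ∧
    iSupIndep (fun T : 𝒞 => Submodule.span ℝ (T : Set V)) ∧
    (⨆ T ∈ 𝒞, Submodule.span ℝ T) = Submodule.span ℝ S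


/-- The vector `(i|j) = e_i - f_j` of the arrangement `Δ(m,n)` in `ℝ^{m+n}`. -/
def mvec (m n : ℕ) (p : Fin m × Fin n) : (Fin m ⊕ Fin n) → ℝ :=
  Pi.single (Sum.inl p.1) 1 - Pi.single (Sum.inr p.2) 1

variable {m n : ℕ}

@[simp] lemma mvec_inl (p : Fin m × Fin n) (i : Fin m) :
    mvec m n p (Sum.inl i) = if i = p.1 then 1 else 0 := by
  simp [mvec, Pi.single_apply]

@[simp] lemma mvec_inr (p : Fin m × Fin n) (j : Fin n) :
    mvec m n p (Sum.inr j) = if j = p.2 then -1 else 0 := by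
  simp [mvec, Pi.single_apply]
  split_ifs <;> norm_num

lemma mvec_inj : Function.Injective (mvec m n) := by
  intro p q h
  have h1 := congrFun h (Sum.inl p.1)
  have h2 := congrFun h (Sum.inr p.2)
  simp at h1 h2
  exact Prod.ext h1 h2

lemma cycle_eq (i i' : Fin m) (j j' : Fin n) :
    mvec m n (i,j) - mvec m n (i,j') + mvec m n (i',j') - mvec m n (i',j) = 0 := by
  funext k
  rcases k with a | b <;> simp <;> split_ifs <;> ring

open Submodule in
lemma span_eval_zero {S : Set ((Fin m ⊕ Fin n) → ℝ)} (k : Fin m ⊕ Fin n)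
    (h : ∀ v ∈ S, v k = 0) {x} (hx : x ∈ Submodule.span ℝ S) : x k = 0 := by
  have hle : Submodule.span ℝ S ≤ LinearMap.ker (LinearMap.proj (R := ℝ) (φ := fun _ : Fin m ⊕ Fin n => ℝ) k) := by
    rw [Submodule.span_le]
    intro v hv
    simpa [LinearMap.mem_ker] using h v hv
  simpa using hle hx

lemma rect_complete (A : Set (Fin m)) (B : Set (Fin n)) :
    IsCompleteSet (Set.range (mvec m n)) (mvec m n '' (A ×ˢ B)) := by
  apply Set.Subset.antisymm
  · rintro x ⟨⟨q, rfl⟩, hx⟩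
    refine ⟨q, ⟨?_, ?_⟩, rfl⟩
    · by_contra hq
      have := span_eval_zero (Sum.inl q.1) (fun v hv => ?_) hx
      · simp at this
      · obtain ⟨p, ⟨hp1, hp2⟩, rfl⟩ := hv
        simp
        intro hq1
        exact absurd (hq1 ▸ hp1) hq
    · by_contra hq
      have := span_eval_zero (Sum.inr q.2) (fun v hv => ?_) hx
      · simp at this
      · obtain ⟨p, ⟨hp1, hp2⟩, rfl⟩ := hv
        simp
        intro hq2
        exact absurd (hq2 ▸ hp2) hq
  · rintro x ⟨p, hp, rfl⟩
    exact ⟨⟨p, rfl⟩, Submodule.subset_span ⟨p, hp, rfl⟩⟩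

lemma singleton_complete (p : Fin m × Fin n) :
    IsCompleteSet (Set.range (mvec m n)) {mvec m n p} := by
  apply Set.Subset.antisymm
  · rintro x ⟨⟨q, rfl⟩, hx⟩
    rw [SetLike.mem_coe, Submodule.mem_span_singleton] at hx
    obtain ⟨c, hc⟩ := hx
    have h1 := congrFun hc (Sum.inl p.1)
    have h2 := congrFun hc (Sum.inr p.2)
    simp [Pi.smul_apply] at h1 h2
    rw [Set.mem_singleton_iff, ← hc]
    split_ifs at h2 with hq2
    · have hc1 : c = 1 := by linarith
      rw [hc1, one_smul]
    · exfalso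
      have hc0 : c = 0 := by linarith
      rw [hc0, zero_smul] at hc
      have := congrFun hc (Sum.inl q.1)
      simp at this
  · rintro x rfl
    exact ⟨⟨p, rfl⟩, Submodule.subset_span rfl⟩

lemma rect_no_decomp (A : Set (Fin m)) (B : Set (Fin n)) (hA : 2 ≤ A.ncard) (hB : 2 ≤ B.ncard)
    (S₁ S₂ : Set ((Fin m ⊕ Fin n) → ℝ))
    (hd : IsDecomposition (mvec m n '' (A ×ˢ B)) S₁ S₂) : False := by
  classical
  obtain ⟨h1ne, h2ne, hdisj, hunion, hinf, _⟩ := hd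
  set Q : Fin m × Fin n → Prop := fun p => mvec m n p ∈ S₁ with hQ
  have hmemS : ∀ p : Fin m × Fin n, p.1 ∈ A → p.2 ∈ B → mvec m n p ∈ S₁ ∪ S₂ := by
    intro p h1 h2
    rw [hunion]
    exact ⟨p, ⟨h1, h2⟩, rfl⟩
  -- the 4-cycle lemma
  have hkey : ∀ i ∈ A, ∀ i' ∈ A, ∀ j ∈ B, ∀ j' ∈ B, i ≠ i' → j ≠ j' →
      ((Q (i,j) ↔ Q (i,j')) ∧ (Q (i,j') ↔ Q (i',j')) ∧ (Q (i',j') ↔ Q (i',j))) := by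
    intro i hi i' hi' j hj j' hj' hii hjj
    set v : (Fin m ⊕ Fin n) → ℝ :=
      (if Q (i,j) then mvec m n (i,j) else 0) - (if Q (i,j') then mvec m n (i,j') else 0)
        + (if Q (i',j') then mvec m n (i',j') else 0) - (if Q (i',j) then mvec m n (i',j) else 0) with hvdef
    set w : (Fin m ⊕ Fin n) → ℝ :=
      (if mvec m n (i,j) ∈ S₂ then mvec m n (i,j) else 0) - (if mvec m n (i,j') ∈ S₂ then mvec m n (i,j') else 0)
        + (if mvec m n (i',j') ∈ S₂ then mvec m n (i',j') else 0) - (if mvec m n (i',j) ∈ S₂ then mvec m n (i',j) else 0) with hwdef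
    have hv1 : v ∈ Submodule.span ℝ S₁ := by
      rw [hvdef]
      refine Submodule.sub_mem _ (Submodule.add_mem _ (Submodule.sub_mem _ ?_ ?_) ?_) ?_ <;>
        · split_ifs with hh
          · exact Submodule.subset_span hh
          · exact Submodule.zero_mem _
    have hw2 : w ∈ Submodule.span ℝ S₂ := by
      rw [hwdef]
      refine Submodule.sub_mem _ (Submodule.add_mem _ (Submodule.sub_mem _ ?_ ?_) ?_) ?_ <;>
        · split_ifs with hh
          · exact Submodule.subset_span hh
          · exact Submodule.zero_mem _
    have hpart : ∀ p : Fin m × Fin n, p.1 ∈ A → p.2 ∈ B →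
        (if Q p then mvec m n p else 0) + (if mvec m n p ∈ S₂ then mvec m n p else 0) = mvec m n p := by
      intro p h1 h2
      by_cases h : Q p
      · have : mvec m n p ∉ S₂ := fun h2' => Set.disjoint_left.mp hdisj h h2'
        simp [h, this]
      · have : mvec m n p ∈ S₂ := (hmemS p h1 h2).resolve_left h
        simp [h, this]
    have hsum : v + w = 0 := by
      have e1 := hpart (i,j) hi hj
      have e2 := hpart (i,j') hi hj'
      have e3 := hpart (i',j') hi' hj'
      have e4 := hpart (i',j) hi' hj
      have heq : v + w = mvec m n (i,j) - mvec m n (i,j') + mvec m n (i',j') - mvec m n (i',j) := by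
        rw [hvdef, hwdef]
        linear_combination e1 - e2 + e3 - e4
      rw [heq]
      exact cycle_eq i i' j j'
    have hv0 : v = 0 := by
      have hv2 : v ∈ Submodule.span ℝ S₂ := by
        rw [eq_neg_of_add_eq_zero_left hsum]
        exact Submodule.neg_mem _ hw2
      have hm : v ∈ Submodule.span ℝ S₁ ⊓ Submodule.span ℝ S₂ := ⟨hv1, hv2⟩
      rw [hinf] at hm
      simpa using hm
    have c1 : Q (i,j) ↔ Q (i,j') := by
      have h := congrFun hv0 (Sum.inl i)
      by_cases hq1 : Q (i,j) <;> by_cases hq2 : Q (i,j')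
      · exact iff_of_true hq1 hq2
      · exfalso
        simp [hvdef, hq1, hq2, hii,
          apply_ite (fun f : (Fin m ⊕ Fin n) → ℝ => f (Sum.inl i))] at h
      · exfalso
        simp [hvdef, hq1, hq2, hii,
          apply_ite (fun f : (Fin m ⊕ Fin n) → ℝ => f (Sum.inl i))] at h
      · exact iff_of_false hq1 hq2
    have c2 : Q (i,j') ↔ Q (i',j') := by
      have h := congrFun hv0 (Sum.inr j')
      by_cases hq1 : Q (i,j') <;> by_cases hq2 : Q (i',j')
      · exact iff_of_true hq1 hq2
      · exfalso
        simp [hvdef, hq1, hq2, Ne.symm hjj,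
          apply_ite (fun f : (Fin m ⊕ Fin n) → ℝ => f (Sum.inr j'))] at h
      · exfalso
        simp [hvdef, hq1, hq2, Ne.symm hjj,
          apply_ite (fun f : (Fin m ⊕ Fin n) → ℝ => f (Sum.inr j'))] at h
      · exact iff_of_false hq1 hq2
    have c3 : Q (i',j') ↔ Q (i',j) := by
      have h := congrFun hv0 (Sum.inl i')
      by_cases hq1 : Q (i',j') <;> by_cases hq2 : Q (i',j)
      · exact iff_of_true hq1 hq2
      · exfalso
        simp [hvdef, hq1, hq2, Ne.symm hii,
          apply_ite (fun f : (Fin m ⊕ Fin n) → ℝ => f (Sum.inl i'))] at h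
      · exfalso
        simp [hvdef, hq1, hq2, Ne.symm hii,
          apply_ite (fun f : (Fin m ⊕ Fin n) → ℝ => f (Sum.inl i'))] at h
      · exact iff_of_false hq1 hq2
    exact ⟨c1, c2, c3⟩
  -- connectivity : all members agree
  obtain ⟨a, ha, a', ha', haa⟩ := (Set.one_lt_ncard (Set.toFinite A)).mp hA
  obtain ⟨b, hb, b', hb', hbb⟩ := (Set.one_lt_ncard (Set.toFinite B)).mp hB
  -- all edges are in the same part
  have hall : ∀ p : Fin m × Fin n, p.1 ∈ A → p.2 ∈ B → ∀ q : Fin m × Fin n, q.1 ∈ A → q.2 ∈ B →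
      (Q p ↔ Q q) := by
    intro p hp1 hp2 q hq1 hq2
    obtain ⟨i, j⟩ := p
    obtain ⟨i', j'⟩ := q
    simp only at hp1 hp2 hq1 hq2
    by_cases hii : i = i'
    · subst hii
      by_cases hjj : j = j'
      · subst hjj; rfl
      · -- same row: pick another i''
        obtain ⟨i'', hi'', hne''⟩ : ∃ i'' ∈ A, i ≠ i'' := by
          by_cases h : i = a
          · exact ⟨a', ha', h ▸ haa⟩
          · exact ⟨a, ha, h⟩
        obtain ⟨d1, d2, d3⟩ := hkey i hp1 i'' hi'' j hp2 j' hq2 hne'' hjj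
        exact d1
    · by_cases hjj : j = j'
      · subst hjj
        obtain ⟨j'', hj'', hne''⟩ : ∃ j'' ∈ B, j ≠ j'' := by
          by_cases h : j = b
          · exact ⟨b', hb', h ▸ hbb⟩
          · exact ⟨b, hb, h⟩
        obtain ⟨d1, d2, d3⟩ := hkey i hp1 i' hq1 j hp2 j'' hj'' hii hne''
        exact d1.trans (d2.trans d3)
      · obtain ⟨d1, d2, d3⟩ := hkey i hp1 i' hq1 j hp2 j' hq2 hii hjj
        exact d1.trans d2
  -- contradiction with nonemptiness of both parts
  obtain ⟨x, hx⟩ := h1ne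
  obtain ⟨y, hy⟩ := h2ne
  have hxS : x ∈ S₁ ∪ S₂ := Or.inl hx
  have hyS : y ∈ S₁ ∪ S₂ := Or.inr hy
  rw [hunion] at hxS hyS
  obtain ⟨p, ⟨hp1, hp2⟩, rfl⟩ := hxS
  obtain ⟨q, ⟨hq1, hq2⟩, rfl⟩ := hyS
  have hQp : Q p := hx
  have hQq : ¬ Q q := fun h => Set.disjoint_left.mp hdisj h hy
  exact hQq ((hall p hp1 hp2 q hq1 hq2).mp hQp)

open Classical in
/-- Coordinate-masking projection. -/
noncomputable def maskProj (P : (Fin m ⊕ Fin n) → Prop) :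
    ((Fin m ⊕ Fin n) → ℝ) →ₗ[ℝ] ((Fin m ⊕ Fin n) → ℝ) where
  toFun x := fun k => if P k then x k else 0
  map_add' x y := by funext k; by_cases h : P k <;> simp [h]
  map_smul' c x := by funext k; by_cases h : P k <;> simp [h]

open Classical in
lemma maskProj_apply (P : (Fin m ⊕ Fin n) → Prop) (x : (Fin m ⊕ Fin n) → ℝ) (k) :
    maskProj P x k = if P k then x k else 0 := rfl

lemma maskProj_fix (Al : Set (Fin m)) (Bl : Set (Fin n)) (q : Fin m × Fin n)
    (h1 : q.1 ∈ Al) (h2 : q.2 ∈ Bl) :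
    maskProj (Sum.elim (· ∈ Al) (· ∈ Bl)) (mvec m n q) = mvec m n q := by
  funext k
  rw [maskProj_apply]
  rcases k with i | j
  · split_ifs with h
    · rfl
    · simp only [mvec_inl]
      rw [if_neg]
      exact fun hiq => h (show i ∈ Al from hiq ▸ h1)
  · split_ifs with h
    · rfl
    · simp only [mvec_inr]
      rw [if_neg]
      exact fun hjq => h (show j ∈ Bl from hjq ▸ h2)

lemma maskProj_kill (Al : Set (Fin m)) (Bl : Set (Fin n)) (q : Fin m × Fin n)
    (h1 : q.1 ∉ Al) (h2 : q.2 ∉ Bl) :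
    maskProj (Sum.elim (· ∈ Al) (· ∈ Bl)) (mvec m n q) = 0 := by
  funext k
  rw [maskProj_apply]
  rcases k with i | j
  · simp only [Pi.zero_apply]
    split_ifs with h
    · simp only [mvec_inl]
      rw [if_neg]
      exact fun hiq => h1 (hiq ▸ (show i ∈ Al from h))
    · rfl
  · simp only [Pi.zero_apply]
    split_ifs with h
    · simp only [mvec_inr]
      rw [if_neg]
      exact fun hjq => h2 (hjq ▸ (show j ∈ Bl from h))
    · rfl

/-- Projection onto the line of `mvec p` reading off the `inr p.2` coordinate. -/
noncomputable def lineProjR (p : Fin m × Fin n) :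
    ((Fin m ⊕ Fin n) → ℝ) →ₗ[ℝ] ((Fin m ⊕ Fin n) → ℝ) :=
  (-(LinearMap.proj (R := ℝ) (φ := fun _ : Fin m ⊕ Fin n => ℝ) (Sum.inr p.2))).smulRight (mvec m n p)

lemma lineProjR_fix (p : Fin m × Fin n) : lineProjR p (mvec m n p) = mvec m n p := by
  simp [lineProjR, LinearMap.smulRight_apply]

lemma lineProjR_kill (p q : Fin m × Fin n) (h : q.2 ≠ p.2) : lineProjR p (mvec m n q) = 0 := by
  simp [lineProjR, LinearMap.smulRight_apply, if_neg (Ne.symm h)]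

noncomputable def lineProjL (p : Fin m × Fin n) :
    ((Fin m ⊕ Fin n) → ℝ) →ₗ[ℝ] ((Fin m ⊕ Fin n) → ℝ) :=
  (LinearMap.proj (R := ℝ) (φ := fun _ : Fin m ⊕ Fin n => ℝ) (Sum.inl p.1)).smulRight (mvec m n p)

lemma lineProjL_fix (p : Fin m × Fin n) : lineProjL p (mvec m n p) = mvec m n p := by
  simp [lineProjL, LinearMap.smulRight_apply]

lemma lineProjL_kill (p q : Fin m × Fin n) (h : q.1 ≠ p.1) : lineProjL p (mvec m n q) = 0 := by
  simp [lineProjL, LinearMap.smulRight_apply, if_neg (Ne.symm h)]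

lemma isupIndep_of_proj {V : Type*} [AddCommGroup V] [Module ℝ V] (C : Set (Set V))
    (h : ∀ T ∈ C, ∃ π : V →ₗ[ℝ] V, (∀ v ∈ T, π v = v) ∧
      (∀ T' ∈ C, T' ≠ T → ∀ v ∈ T', π v = 0)) :
    iSupIndep (fun T : C => Submodule.span ℝ (T : Set V)) := by
  intro T
  obtain ⟨π, hfix, hkill⟩ := h T T.2
  rw [Submodule.disjoint_def]
  intro x hx hx'
  have h1 : π x = x := by
    have hle : Submodule.span ℝ (T : Set V) ≤ LinearMap.eqLocus π LinearMap.id :=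
      Submodule.span_le.mpr (fun v hv => show π v = v from hfix v hv)
    exact hle hx
  have h2 : π x = 0 := by
    have hle : (⨆ (T' : C) (_ : T' ≠ T), Submodule.span ℝ (T' : Set V)) ≤ LinearMap.ker π := by
      apply iSup_le
      intro T'
      apply iSup_le
      intro hne
      rw [Submodule.span_le]
      intro v hv
      exact hkill T' T'.2 (fun hc => hne (Subtype.ext hc)) v hv
    simpa using hle hx'
  rw [← h1, h2]

lemma rect_irred (A : Set (Fin m)) (B : Set (Fin n)) (hA : 2 ≤ A.ncard) (hB : 2 ≤ B.ncard) :
    IsCompleteSet (Set.range (mvec m n)) (mvec m n '' (A ×ˢ B)) ∧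
      (mvec m n '' (A ×ˢ B)).Nonempty ∧
      ∀ S₁ S₂, ¬ IsDecomposition (mvec m n '' (A ×ˢ B)) S₁ S₂ := by
  refine ⟨rect_complete A B, ?_, fun S₁ S₂ hd => rect_no_decomp A B hA hB S₁ S₂ hd⟩
  obtain ⟨a, ha, -⟩ := (Set.one_lt_ncard (Set.toFinite A)).mp hA
  obtain ⟨b, hb, -⟩ := (Set.one_lt_ncard (Set.toFinite B)).mp hB
  exact ⟨mvec m n (a, b), (a, b), ⟨ha, hb⟩, rfl⟩

lemma singleton_irred (p : Fin m × Fin n) :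
    IsCompleteSet (Set.range (mvec m n)) {mvec m n p} ∧
      ({mvec m n p} : Set _).Nonempty ∧
      ∀ S₁ S₂, ¬ IsDecomposition {mvec m n p} S₁ S₂ := by
  refine ⟨singleton_complete p, ⟨_, rfl⟩, ?_⟩
  rintro S₁ S₂ ⟨⟨x1, hx1⟩, ⟨x2, hx2⟩, hdisj, hun, -, -⟩
  have h1 : x1 ∈ ({mvec m n p} : Set _) := hun ▸ Or.inl hx1
  have h2 : x2 ∈ ({mvec m n p} : Set _) := hun ▸ Or.inr hx2
  rw [Set.mem_singleton_iff] at h1 h2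
  subst h1; subst h2
  exact Set.disjoint_left.mp hdisj hx1 hx2

theorem main2 (h : ℕ) (A : Fin h → Set (Fin m)) (B : Fin h → Set (Fin n))
    (hAne : ∀ l, (A l).Nonempty) (hBne : ∀ l, (B l).Nonempty)
    (hAd : ∀ l l', l ≠ l' → Disjoint (A l) (A l'))
    (hBd : ∀ l l', l ≠ l' → Disjoint (B l) (B l')) :
    IsIrredComponents (Set.range (mvec m n)) (mvec m n '' ⋃ l, A l ×ˢ B l)
      ({C | ∃ l, 2 ≤ (A l).ncard ∧ 2 ≤ (B l).ncard ∧
          C = mvec m n '' (A l ×ˢ B l)} ∪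
        {C | ∃ l, ((A l).ncard = 1 ∨ (B l).ncard = 1) ∧
          ∃ p ∈ A l ×ˢ B l, C = {mvec m n p}}) := by
  classical
  set 𝒞 : Set (Set ((Fin m ⊕ Fin n) → ℝ)) :=
    ({C | ∃ l, 2 ≤ (A l).ncard ∧ 2 ≤ (B l).ncard ∧ C = mvec m n '' (A l ×ˢ B l)} ∪
      {C | ∃ l, ((A l).ncard = 1 ∨ (B l).ncard = 1) ∧ ∃ p ∈ A l ×ˢ B l, C = {mvec m n p}})
    with h𝒞
  set S : Set ((Fin m ⊕ Fin n) → ℝ) := mvec m n '' ⋃ l, A l ×ˢ B l with hS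
  have hblkA : ∀ l l' (a : Fin m), a ∈ A l → a ∈ A l' → l = l' := by
    intro l l' a ha ha'
    by_contra hne
    exact Set.disjoint_left.mp (hAd l l' hne) ha ha'
  have hblkB : ∀ l l' (b : Fin n), b ∈ B l → b ∈ B l' → l = l' := by
    intro l l' b hb hb'
    by_contra hne
    exact Set.disjoint_left.mp (hBd l l' hne) hb hb'
  have hA1 : ∀ l (a a' : Fin m), (A l).ncard = 1 → a ∈ A l → a' ∈ A l → a = a' := by
    intro l a a' hc ha ha'
    obtain ⟨x, hx⟩ := Set.ncard_eq_one.mp hc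
    rw [hx] at ha ha'
    rw [ha, ha']
  have hB1 : ∀ l (b b' : Fin n), (B l).ncard = 1 → b ∈ B l → b' ∈ B l → b = b' := by
    intro l b b' hc hb hb'
    obtain ⟨x, hx⟩ := Set.ncard_eq_one.mp hc
    rw [hx] at hb hb'
    rw [hb, hb']
  -- the union
  have hsU : ⋃₀ 𝒞 = S := by
    apply Set.Subset.antisymm
    · rintro x ⟨T, hT, hxT⟩
      rcases hT with ⟨l, -, -, rfl⟩ | ⟨l, -, p, hp, rfl⟩
      · obtain ⟨q, hq, rfl⟩ := hxT
        exact ⟨q, Set.mem_iUnion.mpr ⟨l, hq⟩, rfl⟩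
      · rw [Set.mem_singleton_iff] at hxT
        subst hxT
        exact ⟨p, Set.mem_iUnion.mpr ⟨l, hp⟩, rfl⟩
    · rintro x ⟨p, hp, rfl⟩
      obtain ⟨l, hpl⟩ := Set.mem_iUnion.mp hp
      by_cases hnd : 2 ≤ (A l).ncard ∧ 2 ≤ (B l).ncard
      · exact ⟨mvec m n '' (A l ×ˢ B l), Or.inl ⟨l, hnd.1, hnd.2, rfl⟩, ⟨p, hpl, rfl⟩⟩
      · have hd : (A l).ncard = 1 ∨ (B l).ncard = 1 := by
          have h1 : 0 < (A l).ncard := (Set.ncard_pos (Set.toFinite _)).mpr (hAne l)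
          have h2 : 0 < (B l).ncard := (Set.ncard_pos (Set.toFinite _)).mpr (hBne l)
          omega
        exact ⟨{mvec m n p}, Or.inr ⟨l, hd, p, hpl, rfl⟩, rfl⟩
  refine ⟨?_, ?_, ?_, hsU, ?_, ?_⟩
  -- finiteness
  · apply Set.Finite.subset
      ((Set.finite_range fun l => mvec m n '' (A l ×ˢ B l)).union
        (Set.finite_range fun p : Fin m × Fin n => ({mvec m n p} : Set _)))
    rintro T (⟨l, -, -, rfl⟩ | ⟨l, -, p, -, rfl⟩)
    · exact Or.inl ⟨l, rfl⟩
    · exact Or.inr ⟨p, rfl⟩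
  -- irreducibility of members
  · rintro T (⟨l, h2A, h2B, rfl⟩ | ⟨l, -, p, -, rfl⟩)
    · exact rect_irred (A l) (B l) h2A h2B
    · exact singleton_irred p
  -- pairwise disjointness
  · rintro T hT T' hT' hne
    rw [Function.onFun, Set.disjoint_left]
    intro x hx hx'
    simp only [id_eq] at hx hx'
    apply hne
    rcases hT with ⟨l, h2A, h2B, rfl⟩ | ⟨l, hdeg, p, hp, rfl⟩ <;>
      rcases hT' with ⟨l', h2A', h2B', rfl⟩ | ⟨l', hdeg', p', hp', rfl⟩
    · obtain ⟨q, ⟨hq1, hq2⟩, rfl⟩ := hx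
      obtain ⟨q', ⟨hq1', hq2'⟩, he⟩ := hx'
      have hqq : q' = q := mvec_inj he
      have hll : l = l' := hblkA l l' q.1 hq1 (hqq ▸ hq1')
      rw [hll]
    · exfalso
      obtain ⟨q, ⟨hq1, hq2⟩, rfl⟩ := hx
      rw [Set.mem_singleton_iff] at hx'
      have hqq : q = p' := mvec_inj hx'
      have hll : l = l' := hblkA l l' q.1 hq1 (by rw [hqq]; exact hp'.1)
      subst hll
      rcases hdeg' with h1 | h1 <;> omega
    · exfalso
      obtain ⟨q, ⟨hq1, hq2⟩, rfl⟩ := hx'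
      rw [Set.mem_singleton_iff] at hx
      have hqq : q = p := mvec_inj hx
      have hll : l = l' := hblkA l l' p.1 hp.1 (by rw [← hqq]; exact hq1)
      subst hll
      rcases hdeg with h1 | h1 <;> omega
    · rw [Set.mem_singleton_iff] at hx hx'
      subst hx
      have hpp : p = p' := mvec_inj hx'
      rw [hpp]
  -- independence of spans
  · apply isupIndep_of_proj
    rintro T (⟨l, h2A, h2B, rfl⟩ | ⟨l, hdeg, p, hp, rfl⟩)
    · refine ⟨maskProj (Sum.elim (· ∈ A l) (· ∈ B l)), ?_, ?_⟩
      · rintro v ⟨q, ⟨hq1, hq2⟩, rfl⟩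
        exact maskProj_fix (A l) (B l) q hq1 hq2
      · rintro T' hT' hne v hv
        rcases hT' with ⟨l', h2A', h2B', rfl⟩ | ⟨l', hdeg', q', hq', rfl⟩
        · obtain ⟨q, ⟨hq1, hq2⟩, rfl⟩ := hv
          have hll : l' ≠ l := by
            rintro rfl
            exact hne rfl
          exact maskProj_kill (A l) (B l) q
            (fun hmem => hll (hblkA l' l q.1 hq1 hmem))
            (fun hmem => hll (hblkB l' l q.2 hq2 hmem))
        · rw [Set.mem_singleton_iff] at hv
          subst hv
          have hll : l' ≠ l := by
            rintro rfl
            rcases hdeg' with h1 | h1 <;> omega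
          exact maskProj_kill (A l) (B l) q'
            (fun hmem => hll (hblkA l' l q'.1 hq'.1 hmem))
            (fun hmem => hll (hblkB l' l q'.2 hq'.2 hmem))
    · rcases hdeg with hdA | hdB
      · refine ⟨lineProjR p, ?_, ?_⟩
        · rintro v hv
          rw [Set.mem_singleton_iff] at hv
          subst hv
          exact lineProjR_fix p
        · rintro T' hT' hne v hv
          rcases hT' with ⟨l', h2A', h2B', rfl⟩ | ⟨l', hdeg', q, hq, rfl⟩
          · obtain ⟨q, ⟨hq1, hq2⟩, rfl⟩ := hv
            have hll : l' ≠ l := by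
              rintro rfl
              omega
            exact lineProjR_kill p q
              (fun he => hll (hblkB l' l q.2 hq2 (he ▸ hp.2)))
          · rw [Set.mem_singleton_iff] at hv
            subst hv
            have hqp : q ≠ p := by
              rintro rfl
              exact hne rfl
            by_cases hll : l' = l
            · subst hll
              have h1 : q.1 = p.1 := hA1 l' q.1 p.1 hdA hq.1 hp.1
              have h2 : q.2 ≠ p.2 := fun h2 => hqp (Prod.ext h1 h2)
              exact lineProjR_kill p q h2
            · exact lineProjR_kill p q
                (fun he => hll (hblkB l' l q.2 hq.2 (he ▸ hp.2)))
      · refine ⟨lineProjL p, ?_, ?_⟩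
        · rintro v hv
          rw [Set.mem_singleton_iff] at hv
          subst hv
          exact lineProjL_fix p
        · rintro T' hT' hne v hv
          rcases hT' with ⟨l', h2A', h2B', rfl⟩ | ⟨l', hdeg', q, hq, rfl⟩
          · obtain ⟨q, ⟨hq1, hq2⟩, rfl⟩ := hv
            have hll : l' ≠ l := by
              rintro rfl
              omega
            exact lineProjL_kill p q
              (fun he => hll (hblkA l' l q.1 hq1 (he ▸ hp.1)))
          · rw [Set.mem_singleton_iff] at hv
            subst hv
            have hqp : q ≠ p := by
              rintro rfl
              exact hne rfl
            by_cases hll : l' = l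
            · subst hll
              have h2 : q.2 = p.2 := hB1 l' q.2 p.2 hdB hq.2 hp.2
              have h1 : q.1 ≠ p.1 := fun h1 => hqp (Prod.ext h1 h2)
              exact lineProjL_kill p q h1
            · exact lineProjL_kill p q
                (fun he => hll (hblkA l' l q.1 hq.1 (he ▸ hp.1)))
  -- spans
  · apply le_antisymm
    · apply iSup₂_le
      intro T hT
      apply Submodule.span_mono
      rw [← hsU]
      exact Set.subset_sUnion_of_mem hT
    · rw [Submodule.span_le]
      intro x hx
      have hx' : x ∈ ⋃₀ 𝒞 := hsU.symm ▸ hx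
      obtain ⟨T, hT, hxT⟩ := hx'
      exact le_iSup₂ (f := fun T (_ : T ∈ 𝒞) => Submodule.span ℝ T) T hT
        (Submodule.subset_span hxT)


/-- in `Δ(m,n)` every non-degenerate rectangle `A × B` is
irreducible; and if `S = ⋃ A_l × B_l` is complete with the `A_l` pairwise
disjoint and the `B_l` pairwise disjoint, then the irreducible components of `S`
are the non-degenerate rectangles `A_l × B_l` together with the single elements
of the degenerate rectangles `A_l × B_l`. -/
theorem stmt_16 (m n : ℕ) :
    (∀ (A : Set (Fin m)) (B : Set (Fin n)), 2 ≤ A.ncard → 2 ≤ B.ncard →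
      IsIrred (Set.range (mvec m n)) (mvec m n '' (A ×ˢ B))) ∧
    (∀ (h : ℕ) (A : Fin h → Set (Fin m)) (B : Fin h → Set (Fin n)),
      (∀ l, (A l).Nonempty) → (∀ l, (B l).Nonempty) →
      (∀ l l', l ≠ l' → Disjoint (A l) (A l')) →
      (∀ l l', l ≠ l' → Disjoint (B l) (B l')) →
      IsCompleteSet (Set.range (mvec m n)) (mvec m n '' ⋃ l, A l ×ˢ B l) →
      IsIrredComponents (Set.range (mvec m n)) (mvec m n '' ⋃ l, A l ×ˢ B l)
        ({C | ∃ l, 2 ≤ (A l).ncard ∧ 2 ≤ (B l).ncard ∧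
            C = mvec m n '' (A l ×ˢ B l)} ∪
          {C | ∃ l, ((A l).ncard = 1 ∨ (B l).ncard = 1) ∧
            ∃ p ∈ A l ×ˢ B l, C = {mvec m n p}})) := by
  constructor
  · intro A B hA hB
    exact rect_irred A B hA hB
  · intro h A B hAne hBne hAd hBd _
    exact main2 h A B hAne hBne hAd hBd
end
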